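/- Every element of RP_n can be written as a product of the generators r_i (1 ≤ i ≤ n−1) and p_i (1 ≤ i ≤ n). Specifically, if d ∈ RP_n has top set {a_1 < ... < a_k} and bottom set {b_1 < ... < b_k}, then d equals the product (over i = 1,...,k) of R_{b_i}^{a_i} := r_{a_i−1}·r_{a_i−2}···r_{b_i}, followed by the product of p_i over all i not in the bottom set. -/

import Mathlib

/-- A partial map on `Fin n`, representing a rook-type diagram: the function
goes from the top row of vertices to the bottom row. -/
abbrev PMap (n : ℕ) := Fin n → Option (Fin n)

/-- Diagram multiplication `f ⬝ g`: stack `f` on top of `g`, i.e. apply `f` first. -/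
def pcomp {n : ℕ} (f g : PMap n) : PMap n := fun i => (f i).bind g

/-- The identity diagram. -/
def pid (n : ℕ) : PMap n := fun i => some i

infixl:70 " ⬝ " => pcomp

/-- The generator `r i` (0-indexed): sends vertex `i+1` on top to vertex `i`
on the bottom, is undefined at `i`, and fixes all other vertices. -/
def rmap (n i : ℕ) : PMap n := fun j =>
  if (j : ℕ) = i then none
  else if (j : ℕ) = i + 1 then (if h : i < n then some ⟨i, h⟩ else none)
  else some j

/-- The generator `l i` (0-indexed): sends vertex `i` on top to vertex `i+1`
on the bottom, is undefined at `i+1`, and fixes all other vertices. -/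
def lmap (n i : ℕ) : PMap n := fun j =>
  if (j : ℕ) = i + 1 then none
  else if (j : ℕ) = i then (if h : i + 1 < n then some ⟨i + 1, h⟩ else none)
  else some j

/-- The idempotent `p i` (0-indexed): the partial identity undefined at vertex `i`. -/
def pmapd (n i : ℕ) : PMap n := fun j =>
  if (j : ℕ) = i then none else some j

/-- `f` is a partial injection. -/
def IsInj {n : ℕ} (f : PMap n) : Prop :=
  ∀ i j a, f i = some a → f j = some a → i = j

/-- `f` is order-preserving on its domain. -/
def IsOrd {n : ℕ} (f : PMap n) : Prop :=
  ∀ i j a b, f i = some a → f j = some b → i < j → a < b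

/-- Right-planar condition: each bottom endpoint is weakly to the left of its top endpoint. -/
def IsRtop {n : ℕ} (f : PMap n) : Prop := ∀ i a, f i = some a → a ≤ i

/-- Left-planar condition: each bottom endpoint is weakly to the right of its top endpoint. -/
def IsLtop {n : ℕ} (f : PMap n) : Prop := ∀ i a, f i = some a → i ≤ a

/-- The top (domain) set of a diagram. -/
def domF {n : ℕ} (f : PMap n) : Finset (Fin n) :=
  Finset.univ.filter (fun i => (f i).isSome)

/-- The bottom (range) set of a diagram. -/
def ranF {n : ℕ} (f : PMap n) : Finset (Fin n) :=
  Finset.univ.filter (fun j => ∃ i, f i = some j)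

/-- The left-to-right product of a list of diagrams. -/
def listPComp (n : ℕ) (L : List (PMap n)) : PMap n := L.foldr pcomp (pid n)

/-- `Rword n a b = r_{a-1} · r_{a-2} ⋯ r_b` (and the identity when `a = b`). -/
def Rword (n a b : ℕ) : PMap n :=
  listPComp n ((List.range (a - b)).map (fun k => rmap n (a - 1 - k)))

lemma pcomp_assoc {n : ℕ} (f g h : PMap n) : (f ⬝ g) ⬝ h = f ⬝ (g ⬝ h) := by
  funext i; simp only [pcomp]; cases f i <;> simp [pcomp]

lemma pid_pcomp {n : ℕ} (f : PMap n) : pid n ⬝ f = f := by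
  funext i; simp [pcomp, pid]

lemma listPComp_cons {n : ℕ} (g : PMap n) (L : List (PMap n)) :
    listPComp n (g :: L) = g ⬝ listPComp n L := rfl

lemma listPComp_append (n : ℕ) (L1 L2 : List (PMap n)) :
    listPComp n (L1 ++ L2) = listPComp n L1 ⬝ listPComp n L2 := by
  induction L1 with
  | nil => show listPComp n L2 = pid n ⬝ listPComp n L2; rw [pid_pcomp]
  | cons a t ih => rw [List.cons_append, listPComp_cons, listPComp_cons, ih, pcomp_assoc]

lemma listPComp_flatten (n : ℕ) (LL : List (List (PMap n))) :
    listPComp n LL.flatten = listPComp n (LL.map (listPComp n)) := by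
  induction LL with
  | nil => rfl
  | cons a t ih => rw [List.flatten_cons, listPComp_append, List.map_cons, listPComp_cons, ih]

lemma Rword_eq_step (n a b : ℕ) (h : b < a) :
    Rword n a b = rmap n (a-1) ⬝ Rword n (a-1) b := by
  unfold Rword
  have h1 : a - b = (a - 1 - b) + 1 := by omega
  have hfun : ((fun k => rmap n (a - 1 - k)) ∘ Nat.succ) = (fun k => rmap n (a - 1 - 1 - k)) := by
    funext k
    simp only [Function.comp_apply]
    have he : a - 1 - Nat.succ k = a - 1 - 1 - k := by omega
    rw [he]
  rw [h1, List.range_succ_eq_map, List.map_cons, List.map_map, listPComp_cons, Nat.sub_zero, hfun]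

lemma Rword_self (n b : ℕ) : Rword n b b = pid n := by
  unfold Rword
  rw [Nat.sub_self, List.range_zero, List.map_nil]
  rfl

lemma Rword_spec (n : ℕ) : ∀ (a b : ℕ) (hba : b ≤ a) (han : a < n) (j : Fin n),
    Rword n a b j = if h : (j:ℕ) = a then some ⟨b, by omega⟩
      else if b ≤ (j:ℕ) ∧ (j:ℕ) < a then none else some j := by
  intro a
  induction a with
  | zero =>
    intro b hba han j
    have hb : b = 0 := by omega
    subst hb
    rw [Rword_self]
    split_ifs with h h'
    · simp only [pid]; congr 1; exact Fin.ext h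
    · omega
    · rfl
  | succ m ih =>
    intro b hba han j
    rcases Nat.eq_or_lt_of_le hba with he | hlt
    · subst he
      rw [Rword_self]
      split_ifs with h h'
      · simp only [pid]; congr 1; exact Fin.ext h
      · omega
      · rfl
    · have hba' : b ≤ m := by omega
      have han' : m < n := by omega
      rw [Rword_eq_step n (m+1) b (by omega)]
      simp only [Nat.add_sub_cancel]
      show (rmap n m j).bind (Rword n m b) = _
      rcases Nat.lt_trichotomy (j:ℕ) m with hj | hj | hj
      · have : rmap n m j = some j := by
          simp only [rmap]; rw [if_neg (by omega), if_neg (by omega)]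
        rw [this, Option.bind_some, ih b hba' han' j]
        split_ifs with h1 h2 h3 h4 h5 <;> first | rfl | omega
      · have : rmap n m j = none := by simp only [rmap]; rw [if_pos hj]
        rw [this, Option.bind_none]
        split_ifs with h1 h2 <;> first | rfl | omega
      · rcases Nat.eq_or_lt_of_le hj with hj2 | hj2
        · have : rmap n m j = some ⟨m, han'⟩ := by
            simp only [rmap]; rw [if_neg (by omega), if_pos (by omega), dif_pos han']
          rw [this, Option.bind_some, ih b hba' han' ⟨m, han'⟩]
          simp only [dif_pos (show ((⟨m, han'⟩ : Fin n) : ℕ) = m from rfl)]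
          rw [dif_pos (show (j:ℕ) = m + 1 by omega)]
          simp
        · have h1 : rmap n m j = some j := by
            simp only [rmap]; rw [if_neg (by omega), if_neg (by omega)]
          rw [h1, Option.bind_some, ih b hba' han' j]
          split_ifs with h1 h2 h3 h4 <;> first | rfl | omega

lemma isInj_pcomp {n : ℕ} {f g : PMap n} (hf : IsInj f) (hg : IsInj g) : IsInj (f ⬝ g) := by
  intro i j a hi hj
  simp only [pcomp, Option.bind_eq_some_iff] at hi hj
  obtain ⟨x, hx1, hx2⟩ := hi
  obtain ⟨y, hy1, hy2⟩ := hj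
  have hxy := hg x y a hx2 hy2
  subst hxy
  exact hf i j x hx1 hy1

lemma isInj_listPComp (n : ℕ) (L : List (PMap n)) (h : ∀ g ∈ L, IsInj g) :
    IsInj (listPComp n L) := by
  induction L with
  | nil =>
    intro i j a hi hj
    simp only [listPComp, List.foldr_nil, pid, Option.some.injEq] at hi hj
    rw [hi, hj]
  | cons g t ih =>
    rw [listPComp_cons]
    exact isInj_pcomp (h g (List.mem_cons_self))
      (ih (fun g' hg' => h g' (List.mem_cons_of_mem _ hg')))

lemma rmap_eq_some {n i : ℕ} {j a : Fin n} (h : rmap n i j = some a) :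
    ((j:ℕ) = a ∧ (j:ℕ) ≠ i ∧ (j:ℕ) ≠ i + 1) ∨ ((j:ℕ) = i + 1 ∧ (a:ℕ) = i) := by
  simp only [rmap] at h
  by_cases h1 : (j:ℕ) = i
  · rw [if_pos h1] at h; exact absurd h (by simp)
  by_cases h2 : (j:ℕ) = i + 1
  · have h3 : i < n := by have := j.isLt; omega
    rw [if_neg h1, if_pos h2, dif_pos h3] at h
    have h4 := Option.some.inj h
    right; exact ⟨h2, by rw [← h4]⟩
  · rw [if_neg h1, if_neg h2] at h
    have h4 := Option.some.inj h
    left; exact ⟨by rw [h4], h1, h2⟩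

lemma isInj_rmap (n i : ℕ) : IsInj (rmap n i) := by
  intro x y a hx hy
  rcases rmap_eq_some hx with ⟨e1,e2,e3⟩ | ⟨e1,e2⟩ <;>
    rcases rmap_eq_some hy with ⟨f1,f2,f3⟩ | ⟨f1,f2⟩ <;>
    · apply Fin.ext; omega

lemma isInj_Rword (n a b : ℕ) : IsInj (Rword n a b) := by
  apply isInj_listPComp
  intro g hg
  simp only [List.mem_map, List.mem_range] at hg
  obtain ⟨k, _, rfl⟩ := hg
  exact isInj_rmap n _

lemma pm_spec (n : ℕ) (B : List (Fin n)) (c : Fin n) :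
    listPComp n (B.map (fun (b : Fin n) => pmapd n (↑b))) c
      = if c ∈ B then none else some c := by
  induction B with
  | nil => simp [listPComp, pid]
  | cons b t ih =>
    rw [List.map_cons, listPComp_cons]
    show (pmapd n ↑b c).bind _ = _
    by_cases h : c = b
    · subst h; simp [pmapd]
    · have hc : pmapd n ↑b c = some c := by
        simp only [pmapd]; rw [if_neg (fun hh => h (Fin.ext hh))]
      rw [hc, Option.bind_some, ih]
      simp [List.mem_cons, h]

lemma P_spec (n : ℕ) (f : PMap n) (h2 : IsOrd f) (h3 : IsRtop f) :
    ∀ A : List (Fin n), A.Pairwise (· < ·) → (∀ a ∈ A, (f a).isSome) →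
    (∀ a ∈ A, listPComp n (A.map (fun (a : Fin n) => Rword n (↑a) (↑((f a).getD a)))) a = f a) ∧
    (∀ j : Fin n, (∀ a ∈ A, ∀ b : Fin n, f a = some b → (j:ℕ) < ↑b) →
      listPComp n (A.map (fun (a : Fin n) => Rword n (↑a) (↑((f a).getD a)))) j = some j) := by
  intro A
  induction A with
  | nil =>
    intro _ _
    constructor
    · intro a ha; exact absurd ha (List.not_mem_nil)
    · intro j _; rfl
  | cons a1 t ih =>
    intro hsort hdom
    obtain ⟨b1, hb1⟩ : ∃ b1, f a1 = some b1 :=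
      Option.isSome_iff_exists.mp (hdom a1 (List.mem_cons_self))
    rw [List.pairwise_cons] at hsort
    obtain ⟨hlt, hsort'⟩ := hsort
    have hdom' : ∀ a ∈ t, (f a).isSome := fun a ha => hdom a (List.mem_cons_of_mem _ ha)
    obtain ⟨ih1, ih2⟩ := ih hsort' hdom'
    have hgetD : ((f a1).getD a1) = b1 := by rw [hb1]; rfl
    have hb1a1 : (b1:ℕ) ≤ (a1:ℕ) := h3 a1 b1 hb1
    have key : ∀ j : Fin n,
        listPComp n ((a1::t).map (fun (a : Fin n) => Rword n (↑a) (↑((f a).getD a)))) j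
        = (Rword n ↑a1 ↑b1 j).bind
            (listPComp n (t.map (fun (a : Fin n) => Rword n (↑a) (↑((f a).getD a))))) := by
      intro j
      rw [List.map_cons, listPComp_cons, hgetD]
      rfl
    constructor
    · intro a ha
      rcases List.mem_cons.mp ha with rfl | hat
      · rw [key, hb1]
        have hr : Rword n ↑a ↑b1 a = some b1 := by
          rw [Rword_spec n ↑a ↑b1 hb1a1 a.isLt a, dif_pos rfl]
        rw [hr, Option.bind_some]
        apply ih2
        intro a' ha' b hab
        exact h2 a a' b1 b hb1 hab (hlt a' ha')
      · rw [key]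
        have ha1a : (a1:ℕ) < (a:ℕ) := hlt a hat
        have hr : Rword n ↑a1 ↑b1 a = some a := by
          rw [Rword_spec n ↑a1 ↑b1 hb1a1 a1.isLt a, dif_neg (by omega), if_neg (by omega)]
        rw [hr, Option.bind_some]
        exact ih1 a hat
    · intro j hj
      rw [key]
      have hjb1 : (j:ℕ) < ↑b1 := hj a1 (List.mem_cons_self) b1 hb1
      have hr : Rword n ↑a1 ↑b1 j = some j := by
        rw [Rword_spec n ↑a1 ↑b1 hb1a1 a1.isLt j, dif_neg (by omega), if_neg (by omega)]
      rw [hr, Option.bind_some]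
      exact ih2 j (fun a ha b hab => hj a (List.mem_cons_of_mem _ ha) b hab)


/-- Every element of `RP_n` is a product of the generators `r_i` and `p_i`; specifically,
if `d` has top set `{a_1 < ⋯ < a_k}` and bottom set `{b_1 < ⋯ < b_k}` (with `b_i = d(a_i)`),
then `d = (∏_{i=1}^k R_{b_i}^{a_i}) · (∏_{i ∉ bottom set} p_i)`. -/
theorem rp_generated_by_r_p (n : ℕ) (f : PMap n)
    (h1 : IsInj f) (h2 : IsOrd f) (h3 : IsRtop f) :
    (∃ L : List (PMap n),
        (∀ g ∈ L, (∃ i, i + 1 < n ∧ g = rmap n i) ∨ (∃ i, i < n ∧ g = pmapd n i)) ∧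
        f = listPComp n L) ∧
    f = (listPComp n (((domF f).sort (· ≤ ·)).map
          (fun (a : Fin n) => Rword n (↑a) (↑((f a).getD a))))) ⬝
        (listPComp n ((((ranF f)ᶜ).sort (· ≤ ·)).map (fun (b : Fin n) => pmapd n (↑b)))) := by
  classical
  set A := (domF f).sort (· ≤ ·) with hA
  set B := ((ranF f)ᶜ).sort (· ≤ ·) with hB
  have hsort : A.Pairwise (· < ·) := (Finset.sortedLT_sort _).pairwise
  have hdomA : ∀ a ∈ A, (f a).isSome := by
    intro a ha
    have : a ∈ domF f := (Finset.mem_sort _).mp ha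
    simpa [domF] using this
  obtain ⟨P1, P2⟩ := P_spec n f h2 h3 A hsort hdomA
  set P := listPComp n (A.map (fun (a : Fin n) => Rword n (↑a) (↑((f a).getD a)))) with hP
  set Q := listPComp n (B.map (fun (b : Fin n) => pmapd n (↑b))) with hQ
  have hQspec : ∀ c : Fin n, Q c = if c ∈ ranF f then some c else none := by
    intro c
    rw [hQ, pm_spec]
    by_cases h : c ∈ ranF f
    · rw [if_pos h, if_neg (by rw [hB, Finset.mem_sort, Finset.mem_compl]; exact fun hh => hh h)]
    · rw [if_neg h, if_pos (by rw [hB, Finset.mem_sort, Finset.mem_compl]; exact h)]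
  have hPinj : IsInj P := by
    rw [hP]
    apply isInj_listPComp
    intro g hg
    simp only [List.mem_map] at hg
    obtain ⟨a, _, rfl⟩ := hg
    exact isInj_Rword _ _ _
  have main : f = P ⬝ Q := by
    funext j
    show f j = (P j).bind Q
    cases hfj : f j with
    | some b =>
      have hjd : j ∈ A := by rw [hA, Finset.mem_sort]; simp [domF, hfj]
      rw [P1 j hjd, hfj, Option.bind_some, hQspec, if_pos]
      simp only [ranF, Finset.mem_filter, Finset.mem_univ, true_and]
      exact ⟨j, hfj⟩
    | none =>
      cases hPj : P j with
      | none => rfl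
      | some c =>
        rw [Option.bind_some, hQspec, if_neg]
        intro hc
        simp only [ranF, Finset.mem_filter, Finset.mem_univ, true_and] at hc
        obtain ⟨a, hfa⟩ := hc
        have haA : a ∈ A := by rw [hA, Finset.mem_sort]; simp [domF, hfa]
        have hPa : P a = some c := by rw [P1 a haA, hfa]
        have hja := hPinj j a c hPj hPa
        rw [hja, hfa] at hfj
        exact absurd hfj (by simp)
  refine ⟨?_, main⟩
  refine ⟨(A.map (fun (a : Fin n) =>
      (List.range ((↑a : ℕ) - (↑((f a).getD a) : ℕ))).map
        (fun k => rmap n ((↑a : ℕ) - 1 - k)))).flatten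
      ++ B.map (fun (b : Fin n) => pmapd n (↑b)), ?_, ?_⟩
  · intro g hg
    rcases List.mem_append.mp hg with h | h
    · left
      rw [List.mem_flatten] at h
      obtain ⟨l, hl, hgl⟩ := h
      simp only [List.mem_map] at hl
      obtain ⟨a, haA, rfl⟩ := hl
      simp only [List.mem_map, List.mem_range] at hgl
      obtain ⟨k, hk, rfl⟩ := hgl
      exact ⟨(↑a : ℕ) - 1 - k, by have := a.isLt; omega, rfl⟩
    · right
      simp only [List.mem_map] at h
      obtain ⟨b, _, rfl⟩ := h
      exact ⟨↑b, b.isLt, rfl⟩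
  · rw [listPComp_append, listPComp_flatten, List.map_map]
    exact main
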